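/- Let F : L²(0,1) → L²(0,1) be defined by (Fu)(t) = -c₀ exp(-∫₀ᵗ u(s) ds) with c₀ > 0. Then F is monotone on the set M₀ = {u ∈ L²(0,1) : u ≥ 0 a.e.}, i.e., ⟨Fu - Fv, u - v⟩_{L²} ≥ 0 for all u, v ∈ M₀. -/

import Mathlib

open RealInnerProductSpace MeasureTheory Real Set intervalIntegral

lemma phi_nonneg (w : ℝ) : 0 ≤ w + Real.exp (-w) - 1 := by
  have := Real.add_one_le_exp (-w); linarith

lemma exp_lip {a b : ℝ} (ha : 0 ≤ a) (hb : 0 ≤ b) :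
    |Real.exp (-a) - Real.exp (-b)| ≤ |a - b| := by
  wlog hab : a ≤ b generalizing a b
  · rw [abs_sub_comm, abs_sub_comm a b]; exact this hb ha (le_of_not_ge hab)
  have h2 : 1 - (b - a) ≤ Real.exp (-(b - a)) := by
    have := Real.add_one_le_exp (-(b - a)); linarith
  have h3 : Real.exp (-a) * Real.exp (-(b - a)) = Real.exp (-b) := by
    rw [← Real.exp_add]; ring_nf
  have h4 : Real.exp (-a) ≤ 1 := by
    calc Real.exp (-a) ≤ Real.exp 0 := Real.exp_le_exp.2 (by linarith)
    _ = 1 := Real.exp_zero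
  have h5 : Real.exp (-(b - a)) ≤ 1 := by
    calc Real.exp (-(b - a)) ≤ Real.exp 0 := Real.exp_le_exp.2 (by linarith)
    _ = 1 := Real.exp_zero
  have h1 : Real.exp (-b) ≤ Real.exp (-a) := Real.exp_le_exp.2 (by linarith)
  rw [abs_of_nonneg (by linarith), abs_of_nonpos (by linarith)]
  nlinarith [Real.exp_pos (-a)]

lemma prim_nonneg {f : ℝ → ℝ} (hf0 : ∀ᵐ x, 0 ≤ f x) {t : ℝ} (ht : 0 ≤ t) :
    0 ≤ ∫ s in (0:ℝ)..t, f s :=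
  intervalIntegral.integral_nonneg_of_ae ht hf0

lemma prim_est {f f' : ℝ → ℝ} (hfi : Integrable f) (hf'i : Integrable f')
    (hf0 : ∀ᵐ x, 0 ≤ f x) (hf'0 : ∀ᵐ x, 0 ≤ f' x)
    {t : ℝ} (ht : t ∈ Ioc (0:ℝ) 1) :
    |Real.exp (-(∫ s in (0:ℝ)..t, f s)) - Real.exp (-(∫ s in (0:ℝ)..t, f' s))|
      ≤ ∫ s in Ioc (0:ℝ) 1, |f s - f' s| := by
  refine le_trans (exp_lip (prim_nonneg hf0 ht.1.le) (prim_nonneg hf'0 ht.1.le)) ?_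
  have h1 : (∫ s in (0:ℝ)..t, f s) - ∫ s in (0:ℝ)..t, f' s
      = ∫ s in (0:ℝ)..t, (f s - f' s) :=
    (intervalIntegral.integral_sub hfi.intervalIntegrable
      hf'i.intervalIntegrable).symm
  rw [h1, intervalIntegral.integral_of_le ht.1.le]
  calc |∫ s in Ioc (0:ℝ) t, (f s - f' s)| ≤ ∫ s in Ioc (0:ℝ) t, |f s - f' s| := by
        simpa [Real.norm_eq_abs] using
          MeasureTheory.norm_integral_le_integral_norm (μ := volume.restrict (Ioc (0:ℝ) t))
            (fun s => f s - f' s)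
    _ ≤ ∫ s in Ioc (0:ℝ) 1, |f s - f' s| := by
        apply setIntegral_mono_set ((hfi.sub hf'i).abs.integrableOn)
        · exact Filter.Eventually.of_forall fun x => abs_nonneg _
        · exact HasSubset.Subset.eventuallyLE (Ioc_subset_Ioc_right ht.2)

lemma D_bound {f f' : ℝ → ℝ} (hf0 : ∀ᵐ x, 0 ≤ f x) (hf'0 : ∀ᵐ x, 0 ≤ f' x)
    {t : ℝ} (ht : 0 ≤ t) :
    |Real.exp (-(∫ s in (0:ℝ)..t, f s)) - Real.exp (-(∫ s in (0:ℝ)..t, f' s))| ≤ 1 := by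
  have h1 : Real.exp (-(∫ s in (0:ℝ)..t, f s)) ≤ 1 := by
    calc Real.exp (-(∫ s in (0:ℝ)..t, f s)) ≤ Real.exp 0 :=
          Real.exp_le_exp.2 (by have := prim_nonneg hf0 ht; linarith)
      _ = 1 := Real.exp_zero
  have h2 : Real.exp (-(∫ s in (0:ℝ)..t, f' s)) ≤ 1 := by
    calc Real.exp (-(∫ s in (0:ℝ)..t, f' s)) ≤ Real.exp 0 :=
          Real.exp_le_exp.2 (by have := prim_nonneg hf'0 ht; linarith)
      _ = 1 := Real.exp_zero
  have h3 := Real.exp_pos (-(∫ s in (0:ℝ)..t, f s))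
  have h4 := Real.exp_pos (-(∫ s in (0:ℝ)..t, f' s))
  rw [abs_sub_le_iff]; constructor <;> linarith

lemma P_integrable {f g : ℝ → ℝ} (hfi : Integrable f) (hgi : Integrable g)
    (hf0 : ∀ᵐ x, 0 ≤ f x) (hg0 : ∀ᵐ x, 0 ≤ g x) :
    IntegrableOn (fun t =>
      (Real.exp (-(∫ s in (0:ℝ)..t, g s)) - Real.exp (-(∫ s in (0:ℝ)..t, f s))) * (f t - g t))
      (Ioc (0:ℝ) 1) := by
  apply Integrable.bdd_mul (c := 1) ((hfi.sub hgi).integrableOn)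
  · exact (((hgi.continuous_primitive 0).neg.rexp.sub
      (hfi.continuous_primitive 0).neg.rexp)).aestronglyMeasurable
  · filter_upwards [ae_restrict_mem measurableSet_Ioc] with t ht
    simpa [Real.norm_eq_abs] using D_bound hg0 hf0 ht.1.le

lemma abs_mul_sub_mul {A A' B B' C D₁ D₂ : ℝ} (e1 : |A - A'| ≤ C) (e2 : |A'| ≤ 1)
    (e3 : |B| ≤ D₁) (e4 : |B - B'| ≤ D₂) : |A * B - A' * B'| ≤ C * D₁ + D₂ := by
  have h : A * B - A' * B' = (A - A') * B + A' * (B - B') := by ring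
  rw [h]
  calc |(A - A') * B + A' * (B - B')| ≤ |(A - A') * B| + |A' * (B - B')| := abs_add_le _ _
    _ = |A - A'| * |B| + |A'| * |B - B'| := by rw [abs_mul, abs_mul]
    _ ≤ C * D₁ + 1 * D₂ := add_le_add
        (mul_le_mul e1 e3 (abs_nonneg _) (le_trans (abs_nonneg _) e1))
        (mul_le_mul e2 e4 (abs_nonneg _) zero_le_one)
    _ = C * D₁ + D₂ := by ring

lemma cont_nonneg (f g : ℝ → ℝ) (hf : Continuous f) (hg : Continuous g)
    (hf0 : ∀ x, 0 ≤ f x) (hg0 : ∀ x, 0 ≤ g x) :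
    0 ≤ ∫ t in Ioc (0:ℝ) 1,
      (Real.exp (-(∫ s in (0:ℝ)..t, g s)) - Real.exp (-(∫ s in (0:ℝ)..t, f s))) * (f t - g t) := by
  set G : ℝ → ℝ := fun t => ∫ s in (0:ℝ)..t, f s with hGdef
  set H : ℝ → ℝ := fun t => ∫ s in (0:ℝ)..t, g s with hHdef
  have hG : ∀ t, HasDerivAt G (f t) t := fun t =>
    intervalIntegral.integral_hasDerivAt_right (hf.intervalIntegrable _ _)
      hf.aestronglyMeasurable.stronglyMeasurableAtFilter hf.continuousAt
  have hH : ∀ t, HasDerivAt H (g t) t := fun t =>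
    intervalIntegral.integral_hasDerivAt_right (hg.intervalIntegrable _ _)
      hg.aestronglyMeasurable.stronglyMeasurableAtFilter hg.continuousAt
  have hGc : Continuous G := continuous_iff_continuousAt.2 fun t => (hG t).continuousAt
  have hHc : Continuous H := continuous_iff_continuousAt.2 fun t => (hH t).continuousAt
  set Φ : ℝ → ℝ := fun w => w + Real.exp (-w) - 1 with hΦdef
  set Ψ : ℝ → ℝ := fun t => Real.exp (-(H t)) * Φ (G t - H t) with hΨdef
  set ψ : ℝ → ℝ := fun t => -g t * Real.exp (-(H t)) * Φ (G t - H t)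
    + Real.exp (-(H t)) * ((1 - Real.exp (-(G t - H t))) * (f t - g t)) with hψdef
  have hΨ : ∀ t, HasDerivAt Ψ (ψ t) t := by
    intro t
    have h1 : HasDerivAt (fun t => Real.exp (-(H t))) (Real.exp (-(H t)) * (-(g t))) t :=
      ((hH t).neg).exp
    have hW : HasDerivAt (fun t => G t - H t) (f t - g t) t := (hG t).sub (hH t)
    have hΦd : HasDerivAt Φ (1 - Real.exp (-(G t - H t))) (G t - H t) := by
      have h2 : HasDerivAt (fun w : ℝ => w + Real.exp (-w) - 1)
          (1 + Real.exp (-(G t - H t)) * (-1)) (G t - H t) := by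
        simpa using
          ((hasDerivAt_id (G t - H t)).add ((hasDerivAt_id (G t - H t)).neg.exp)).sub_const 1
      rw [hΦdef]; convert h2 using 1; ring
    have h3 : HasDerivAt (fun t => Φ (G t - H t)) ((1 - Real.exp (-(G t - H t))) * (f t - g t)) t :=
      HasDerivAt.comp (h := fun t => G t - H t) t hΦd hW
    have := h1.mul h3
    refine this.congr_deriv ?_
    simp only [hψdef]; ring
  have hψc : Continuous ψ := by
    simp only [hψdef, hΦdef]
    fun_prop
  have hftc : ∫ t in (0:ℝ)..1, ψ t = Ψ 1 - Ψ 0 :=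
    intervalIntegral.integral_eq_sub_of_hasDerivAt (fun t _ => hΨ t)
      (hψc.intervalIntegrable _ _)
  have hΨ0 : Ψ 0 = 0 := by
    simp [hΨdef, hGdef, hHdef, hΦdef, intervalIntegral.integral_same]
  have hΨ1 : 0 ≤ Ψ 1 := mul_nonneg (Real.exp_nonneg _) (phi_nonneg _)
  have key : ∀ t, (Real.exp (-(H t)) - Real.exp (-(G t))) * (f t - g t)
      = ψ t + g t * Real.exp (-(H t)) * Φ (G t - H t) := by
    intro t
    have : Real.exp (-(H t)) * Real.exp (-(G t - H t)) = Real.exp (-(G t)) := by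
      rw [← Real.exp_add]; ring_nf
    simp only [hψdef]
    rw [← this]; ring
  calc (0:ℝ) ≤ (Ψ 1 - Ψ 0) + ∫ t in Ioc (0:ℝ) 1, g t * Real.exp (-(H t)) * Φ (G t - H t) := by
        have : 0 ≤ ∫ t in Ioc (0:ℝ) 1, g t * Real.exp (-(H t)) * Φ (G t - H t) :=
          setIntegral_nonneg measurableSet_Ioc (fun t _ => by
            exact mul_nonneg (mul_nonneg (hg0 t) (Real.exp_nonneg _)) (phi_nonneg _))
        linarith
    _ = (∫ t in Ioc (0:ℝ) 1, ψ t) + ∫ t in Ioc (0:ℝ) 1, g t * Real.exp (-(H t)) * Φ (G t - H t) := by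
        rw [← hftc, intervalIntegral.integral_of_le (by norm_num : (0:ℝ) ≤ 1)]
    _ = ∫ t in Ioc (0:ℝ) 1, (ψ t + g t * Real.exp (-(H t)) * Φ (G t - H t)) := by
        rw [← integral_add (g := fun t => g t * Real.exp (-(H t)) * Φ (G t - H t)) (hψc.integrableOn_Ioc)
          (((hg.mul (Continuous.rexp (by fun_prop))).mul (by fun_prop)).integrableOn_Ioc)]
    _ = ∫ t in Ioc (0:ℝ) 1, (Real.exp (-(H t)) - Real.exp (-(G t))) * (f t - g t) := by
        congr 1; funext t; rw [key t]

lemma main_nonneg (f g : ℝ → ℝ) (hfi : Integrable f) (hgi : Integrable g)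
    (hf0 : ∀ᵐ x, 0 ≤ f x) (hg0 : ∀ᵐ x, 0 ≤ g x) :
    0 ≤ ∫ t in Ioc (0:ℝ) 1,
      (Real.exp (-(∫ s in (0:ℝ)..t, g s)) - Real.exp (-(∫ s in (0:ℝ)..t, f s))) * (f t - g t) := by
  refine le_of_forall_pos_le_add fun ε hε => ?_
  set K := ∫ t in Ioc (0:ℝ) 1, (|f t| + |g t|) with hKdef
  have hK0 : 0 ≤ K := setIntegral_nonneg measurableSet_Ioc (fun t _ => by positivity)
  have hδpos : 0 < ε / (2 * (K + 1)) := by positivity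
  obtain ⟨h₁, -, hh₁, hh₁c, hh₁i⟩ := hfi.exists_hasCompactSupport_integral_sub_le hδpos
  obtain ⟨h₂, -, hh₂, hh₂c, hh₂i⟩ := hgi.exists_hasCompactSupport_integral_sub_le hδpos
  set f' : ℝ → ℝ := fun x => max (h₁ x) 0 with hf'def
  set g' : ℝ → ℝ := fun x => max (h₂ x) 0 with hg'def
  have hf'c : Continuous f' := hh₁c.max continuous_const
  have hg'c : Continuous g' := hh₂c.max continuous_const
  have hf'0 : ∀ x, 0 ≤ f' x := fun x => le_max_right _ _
  have hg'0 : ∀ x, 0 ≤ g' x := fun x => le_max_right _ _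
  have habs_max : ∀ (h : ℝ → ℝ) x, |max (h x) 0| ≤ |h x| := by
    intro h x
    rcases le_or_gt (h x) 0 with hx | hx
    · simp [max_eq_right hx]
    · simp [max_eq_left hx.le]
  have hf'i : Integrable f' := hh₁i.mono hf'c.aestronglyMeasurable
    (Filter.Eventually.of_forall fun x => by
      simpa [Real.norm_eq_abs] using habs_max h₁ x)
  have hg'i : Integrable g' := hh₂i.mono hg'c.aestronglyMeasurable
    (Filter.Eventually.of_forall fun x => by
      simpa [Real.norm_eq_abs] using habs_max h₂ x)
  have hmax_close : ∀ (φ h : ℝ → ℝ), (∀ᵐ x, 0 ≤ φ x) →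
      ∀ᵐ x, |φ x - max (h x) 0| ≤ |φ x - h x| := by
    intro φ h hφ0
    filter_upwards [hφ0] with x hx
    rcases le_or_gt (h x) 0 with h0 | h0
    · rw [max_eq_right h0, sub_zero, abs_of_nonneg hx,
        abs_of_nonneg (by linarith : (0:ℝ) ≤ φ x - h x)]
      linarith
    · rw [max_eq_left h0.le]
  have hδf : ∫ x in Ioc (0:ℝ) 1, |f x - f' x| ≤ ε / (2 * (K + 1)) := by
    calc ∫ x in Ioc (0:ℝ) 1, |f x - f' x| ≤ ∫ x, |f x - f' x| :=
          setIntegral_le_integral ((hfi.sub hf'i).abs)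
            (Filter.Eventually.of_forall fun x => abs_nonneg _)
      _ ≤ ∫ x, |f x - h₁ x| := integral_mono_ae ((hfi.sub hf'i).abs) ((hfi.sub hh₁i).abs)
            (hmax_close f h₁ hf0)
      _ ≤ ε / (2 * (K + 1)) := by simpa [Real.norm_eq_abs] using hh₁
  have hδg : ∫ x in Ioc (0:ℝ) 1, |g x - g' x| ≤ ε / (2 * (K + 1)) := by
    calc ∫ x in Ioc (0:ℝ) 1, |g x - g' x| ≤ ∫ x, |g x - g' x| :=
          setIntegral_le_integral ((hgi.sub hg'i).abs)
            (Filter.Eventually.of_forall fun x => abs_nonneg _)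
      _ ≤ ∫ x, |g x - h₂ x| := integral_mono_ae ((hgi.sub hg'i).abs) ((hgi.sub hh₂i).abs)
            (hmax_close g h₂ hg0)
      _ ≤ ε / (2 * (K + 1)) := by simpa [Real.norm_eq_abs] using hh₂
  set δf := ∫ x in Ioc (0:ℝ) 1, |f x - f' x| with hδfdef
  set δg := ∫ x in Ioc (0:ℝ) 1, |g x - g' x| with hδgdef
  have hδf0 : 0 ≤ δf := setIntegral_nonneg measurableSet_Ioc fun x _ => abs_nonneg _
  have hδg0 : 0 ≤ δg := setIntegral_nonneg measurableSet_Ioc fun x _ => abs_nonneg _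
  set P : ℝ → ℝ := fun t =>
    (Real.exp (-(∫ s in (0:ℝ)..t, g s)) - Real.exp (-(∫ s in (0:ℝ)..t, f s))) * (f t - g t)
    with hPdef
  set P' : ℝ → ℝ := fun t =>
    (Real.exp (-(∫ s in (0:ℝ)..t, g' s)) - Real.exp (-(∫ s in (0:ℝ)..t, f' s))) * (f' t - g' t)
    with hP'def
  have hI' : 0 ≤ ∫ t in Ioc (0:ℝ) 1, P' t := cont_nonneg f' g' hf'c hg'c hf'0 hg'0
  have hint : IntegrableOn P (Ioc (0:ℝ) 1) := P_integrable hfi hgi hf0 hg0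
  have hint' : IntegrableOn P' (Ioc (0:ℝ) 1) := P_integrable hf'i hg'i
    (Filter.Eventually.of_forall hf'0) (Filter.Eventually.of_forall hg'0)
  have hbd : ∀ᵐ t ∂(volume.restrict (Ioc (0:ℝ) 1)),
      |P t - P' t| ≤ (δf + δg) * (|f t| + |g t|) + (|f t - f' t| + |g t - g' t|) := by
    filter_upwards [ae_restrict_mem measurableSet_Ioc] with t ht
    apply abs_mul_sub_mul
    · have e1 := prim_est hgi hg'i hg0 (Filter.Eventually.of_forall hg'0) ht
      have e2 := prim_est hfi hf'i hf0 (Filter.Eventually.of_forall hf'0) ht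
      calc |(Real.exp (-(∫ s in (0:ℝ)..t, g s)) - Real.exp (-(∫ s in (0:ℝ)..t, f s)))
            - (Real.exp (-(∫ s in (0:ℝ)..t, g' s)) - Real.exp (-(∫ s in (0:ℝ)..t, f' s)))|
          = |(Real.exp (-(∫ s in (0:ℝ)..t, g s)) - Real.exp (-(∫ s in (0:ℝ)..t, g' s)))
            - (Real.exp (-(∫ s in (0:ℝ)..t, f s)) - Real.exp (-(∫ s in (0:ℝ)..t, f' s)))| := by
            congr 1; ring
        _ ≤ |Real.exp (-(∫ s in (0:ℝ)..t, g s)) - Real.exp (-(∫ s in (0:ℝ)..t, g' s))|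
            + |Real.exp (-(∫ s in (0:ℝ)..t, f s)) - Real.exp (-(∫ s in (0:ℝ)..t, f' s))| :=
            abs_sub _ _
        _ ≤ δf + δg := by rw [← hδfdef, ← hδgdef] at *; linarith
    · exact D_bound (Filter.Eventually.of_forall hg'0) (Filter.Eventually.of_forall hf'0) ht.1.le
    · exact abs_sub _ _
    · calc |(f t - g t) - (f' t - g' t)| = |(f t - f' t) - (g t - g' t)| := by congr 1; ring
        _ ≤ |f t - f' t| + |g t - g' t| := abs_sub _ _
  have int1 : Integrable (fun t => (δf + δg) * (|f t| + |g t|))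
      (volume.restrict (Ioc (0:ℝ) 1)) :=
    ((hfi.abs.integrableOn).add (hgi.abs.integrableOn)).const_mul _
  have int2 : Integrable (fun t => |f t - f' t| + |g t - g' t|)
      (volume.restrict (Ioc (0:ℝ) 1)) :=
    ((hfi.sub hf'i).abs.integrableOn).add ((hgi.sub hg'i).abs.integrableOn)
  have habs : |(∫ t in Ioc (0:ℝ) 1, P t) - ∫ t in Ioc (0:ℝ) 1, P' t|
      ≤ (δf + δg) * K + (δf + δg) := by
    rw [← integral_sub hint hint']
    calc |∫ t in Ioc (0:ℝ) 1, (P t - P' t)| ≤ ∫ t in Ioc (0:ℝ) 1, |P t - P' t| := by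
          simpa [Real.norm_eq_abs] using
            MeasureTheory.norm_integral_le_integral_norm
              (μ := volume.restrict (Ioc (0:ℝ) 1)) (fun t => P t - P' t)
      _ ≤ ∫ t in Ioc (0:ℝ) 1,
            ((δf + δg) * (|f t| + |g t|) + (|f t - f' t| + |g t - g' t|)) := by
          exact integral_mono_ae (hint.sub hint').abs (int1.add int2) hbd
      _ = (δf + δg) * K + (δf + δg) := by
          have int2a : Integrable (fun t => |f t - f' t|) (volume.restrict (Ioc (0:ℝ) 1)) :=
            (hfi.sub hf'i).abs.integrableOn
          have int2b : Integrable (fun t => |g t - g' t|) (volume.restrict (Ioc (0:ℝ) 1)) :=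
            (hgi.sub hg'i).abs.integrableOn
          rw [integral_add int1 int2, MeasureTheory.integral_const_mul,
            integral_add int2a int2b, ← hδfdef, ← hδgdef, ← hKdef]
  have h6 : (δf + δg) * (K + 1) ≤ ε := by
    have h7 : δf + δg ≤ 2 * (ε / (2 * (K + 1))) := by linarith
    calc (δf + δg) * (K + 1) ≤ 2 * (ε / (2 * (K + 1))) * (K + 1) := by
          apply mul_le_mul_of_nonneg_right h7 (by linarith)
      _ = ε := by field_simp
  have h8 := neg_abs_le ((∫ t in Ioc (0:ℝ) 1, P t) - ∫ t in Ioc (0:ℝ) 1, P' t)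
  have : (δf + δg) * K + (δf + δg) = (δf + δg) * (K + 1) := by ring
  linarith

theorem stmt_13
    (μ : Measure ℝ) (hμ : μ = volume.restrict (Set.Ioc (0:ℝ) 1))
    (c₀ : ℝ) (hc₀ : 0 < c₀)
    (F : Lp ℝ 2 μ → Lp ℝ 2 μ)
    (hF : ∀ u : Lp ℝ 2 μ,
      (F u : ℝ → ℝ) =ᵐ[μ]
        fun t => -c₀ * Real.exp (-(∫ s in Set.Ioc (0:ℝ) t, u s))) :
    ∀ u : Lp ℝ 2 μ, (∀ᵐ t ∂μ, 0 ≤ u t) →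
      ∀ v : Lp ℝ 2 μ, (∀ᵐ t ∂μ, 0 ≤ v t) →
        ⟪F u - F v, u - v⟫ ≥ 0 := by
  subst hμ
  intro u hu v hv
  haveI : IsFiniteMeasure (volume.restrict (Set.Ioc (0:ℝ) 1)) := by
    constructor; simp [Real.volume_Ioc]
  have hui : Integrable (u : ℝ → ℝ) (volume.restrict (Set.Ioc (0:ℝ) 1)) :=
    (Lp.memLp u).integrable (by norm_num)
  have hvi : Integrable (v : ℝ → ℝ) (volume.restrict (Set.Ioc (0:ℝ) 1)) :=
    (Lp.memLp v).integrable (by norm_num)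
  set f : ℝ → ℝ := (Ioc (0:ℝ) 1).indicator (u : ℝ → ℝ) with hfdef
  set g : ℝ → ℝ := (Ioc (0:ℝ) 1).indicator (v : ℝ → ℝ) with hgdef
  have hfi : Integrable f volume := by
    rw [hfdef, integrable_indicator_iff measurableSet_Ioc]; exact hui
  have hgi : Integrable g volume := by
    rw [hgdef, integrable_indicator_iff measurableSet_Ioc]; exact hvi
  have hind0 : ∀ (w : ℝ → ℝ), (∀ᵐ t ∂(volume.restrict (Set.Ioc (0:ℝ) 1)), 0 ≤ w t) →
      ∀ᵐ x ∂(volume : Measure ℝ), 0 ≤ (Ioc (0:ℝ) 1).indicator w x := by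
    intro w hw
    rw [ae_restrict_iff' measurableSet_Ioc] at hw
    filter_upwards [hw] with x hx
    by_cases hmem : x ∈ Ioc (0:ℝ) 1
    · rw [Set.indicator_of_mem hmem]; exact hx hmem
    · rw [Set.indicator_of_notMem hmem]
  have hf0 : ∀ᵐ x ∂(volume : Measure ℝ), 0 ≤ f x := hind0 _ hu
  have hg0 : ∀ᵐ x ∂(volume : Measure ℝ), 0 ≤ g x := hind0 _ hv
  have hbridge : ∀ (w : ℝ → ℝ), ∀ t ∈ Ioc (0:ℝ) 1,
      (∫ s in Set.Ioc (0:ℝ) t, w s) = ∫ s in (0:ℝ)..t, (Ioc (0:ℝ) 1).indicator w s := by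
    intro w t ht
    rw [intervalIntegral.integral_of_le ht.1.le]
    refine (setIntegral_congr_fun measurableSet_Ioc fun s hs => ?_)
    exact (Set.indicator_of_mem (Ioc_subset_Ioc_right ht.2 hs) w).symm
  have hinner : ⟪F u - F v, u - v⟫
      = ∫ t, ((F u - F v : Lp ℝ 2 (volume.restrict (Set.Ioc (0:ℝ) 1))) : ℝ → ℝ) t
          * ((u - v : Lp ℝ 2 (volume.restrict (Set.Ioc (0:ℝ) 1))) : ℝ → ℝ) t
          ∂(volume.restrict (Set.Ioc (0:ℝ) 1)) := by
    rw [L2.inner_def]; simp [RCLike.inner_apply, mul_comm]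
  have hcongr : (fun t => ((F u - F v : Lp ℝ 2 (volume.restrict (Set.Ioc (0:ℝ) 1))) : ℝ → ℝ) t
          * ((u - v : Lp ℝ 2 (volume.restrict (Set.Ioc (0:ℝ) 1))) : ℝ → ℝ) t)
      =ᵐ[volume.restrict (Set.Ioc (0:ℝ) 1)]
      (fun t => c₀ * ((Real.exp (-(∫ s in (0:ℝ)..t, g s)) - Real.exp (-(∫ s in (0:ℝ)..t, f s)))
        * (f t - g t))) := by
    filter_upwards [hF u, hF v, Lp.coeFn_sub (F u) (F v), Lp.coeFn_sub u v,
      ae_restrict_mem measurableSet_Ioc] with t h1 h2 h3 h4 ht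
    rw [h3, Pi.sub_apply, h1, h2, h4, Pi.sub_apply,
      hbridge (u : ℝ → ℝ) t ht, hbridge (v : ℝ → ℝ) t ht, ← hfdef, ← hgdef,
      show (u : ℝ → ℝ) t = f t from (Set.indicator_of_mem ht _).symm,
      show (v : ℝ → ℝ) t = g t from (Set.indicator_of_mem ht _).symm]
    ring
  rw [ge_iff_le, hinner, integral_congr_ae hcongr, MeasureTheory.integral_const_mul]
  exact mul_nonneg hc₀.le (main_nonneg f g hfi hgi hf0 hg0)
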